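/- Let A be a commutative unital C*-algebra generated by a countable family of projections p₁, p₂, …. Then the Gelfand spectrum of A is a totally disconnected compact metrizable space, and consequently there exists a self-adjoint element a ∈ A with A = C*(a) and σ(a) homeomorphic to a subset of the Cantor set. -/

import Mathlib

open WeakDual Topology

section Aux

/-- The Cantor function `f ↦ ∑ f n * c ^ n` is continuous for `0 ≤ c < 1`. -/
lemma continuous_cantorFunction_aux {c : ℝ} (h0 : 0 ≤ c) (h1 : c < 1) :
    Continuous (Cardinal.cantorFunction c) := by
  have : Continuous fun f : ℕ → Bool => ∑' n, Cardinal.cantorFunctionAux c f n := by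
    refine continuous_tsum (fun n => ?_) (summable_geometric_of_lt_one h0 h1) (fun n f => ?_)
    · have hn : Continuous fun f : ℕ → Bool => f n := continuous_apply n
      have hb : Continuous fun b : Bool => (cond b (c ^ n) 0 : ℝ) :=
        continuous_of_discreteTopology
      simpa [Cardinal.cantorFunctionAux, Function.comp_def] using hb.comp hn
    · rcases hf : f n with _ | _
      · simp [Cardinal.cantorFunctionAux_false hf, pow_nonneg h0]
      · simp [Cardinal.cantorFunctionAux_true hf, abs_of_nonneg h0]
  exact this

end Aux

/-- If a commutative unital C*-algebra `A` is generated (as a unital C*-algebra) by a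
countable family of projections `p₁, p₂, …`, then its Gelfand spectrum is a compact,
metrizable, totally disconnected space, and consequently there is a self-adjoint `a ∈ A`
with `A = C*(a)` and `σ(a)` homeomorphic to a subset of the Cantor set (equivalently,
`σ(a)` embeds into the Cantor space `ℕ → Bool`). -/
theorem spectrum_totally_disconnected_of_generated_by_projections
    {A : Type*} [NormedCommRing A] [StarRing A] [CStarRing A] [CompleteSpace A]
    [NormedAlgebra ℂ A] [StarModule ℂ A]
    (p : ℕ → A)
    (hidem : ∀ n, p n * p n = p n) (hsa : ∀ n, star (p n) = p n)
    (hgen : (StarAlgebra.adjoin ℂ (Set.range p)).topologicalClosure = ⊤) :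
    (CompactSpace (WeakDual.characterSpace ℂ A) ∧
      TopologicalSpace.MetrizableSpace (WeakDual.characterSpace ℂ A) ∧
      TotallyDisconnectedSpace (WeakDual.characterSpace ℂ A)) ∧
    ∃ a : A, IsSelfAdjoint a ∧
      (StarAlgebra.adjoin ℂ {a}).topologicalClosure = ⊤ ∧
      ∃ f : spectrum ℂ a → (ℕ → Bool), Topology.IsEmbedding f := by
  classical
  letI : CStarAlgebra A := { ‹NormedCommRing A›.toNormedRing, ‹StarRing A›, ‹CompleteSpace A›,
    ‹CStarRing A›, ‹NormedAlgebra ℂ A›, ‹StarModule ℂ A› with }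
  letI : CommCStarAlgebra A := { ‹NormedCommRing A›, (inferInstance : CStarAlgebra A) with }
  -- each character takes only the values `0` and `1` on each projection
  have hval : ∀ (φ : characterSpace ℂ A) (n : ℕ), φ (p n) = 0 ∨ φ (p n) = 1 := by
    intro φ n
    have h : φ (p n) * (φ (p n) - 1) = 0 := by
      have := congrArg φ (hidem n)
      rw [map_mul] at this
      ring_nf
      linear_combination this
    rcases mul_eq_zero.mp h with h0 | h1
    · exact Or.inl h0
    · exact Or.inr (sub_eq_zero.mp h1)
  -- the canonical map into the Cantor space
  set Φ : characterSpace ℂ A → ℕ → Bool := fun φ n => decide (φ (p n) = 1) with hΦdef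
  -- injectivity
  have hΦinj : Function.Injective Φ := by
    intro φ ψ h
    have hpt : ∀ n, φ (p n) = ψ (p n) := by
      intro n
      have hn : decide (φ (p n) = 1) = decide (ψ (p n) = 1) := congrFun h n
      rw [decide_eq_decide] at hn
      rcases hval φ n with h1 | h1 <;> rcases hval ψ n with h2 | h2 <;> simp_all
    have key : (StarAlgebra.adjoin ℂ (Set.range p) : Set A) ⊆ {x | φ x = ψ x} := by
      intro x hx
      induction hx using StarAlgebra.adjoin_induction with
      | mem x hx => obtain ⟨n, rfl⟩ := hx; exact hpt n
      | algebraMap r => simp [AlgHomClass.commutes]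
      | add x y _ _ hx hy => simp only [Set.mem_setOf_eq] at *; rw [map_add, map_add, hx, hy]
      | mul x y _ _ hx hy => simp only [Set.mem_setOf_eq] at *; rw [map_mul, map_mul, hx, hy]
      | star x _ hx => simp only [Set.mem_setOf_eq] at *; rw [map_star, map_star, hx]
    have hclosed : IsClosed {x : A | φ x = ψ x} :=
      isClosed_eq (map_continuous φ) (map_continuous ψ)
    have hall : ∀ x : A, φ x = ψ x := by
      intro x
      have hx : x ∈ (StarAlgebra.adjoin ℂ (Set.range p)).topologicalClosure := by
        rw [hgen]; trivial
      have hx' : x ∈ closure ((StarAlgebra.adjoin ℂ (Set.range p)) : Set A) := hx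
      exact hclosed.closure_subset_iff.mpr key hx'
    exact Subtype.ext (ContinuousLinearMap.ext hall)
  -- continuity
  have hΦcont : Continuous Φ := by
    refine continuous_pi fun n => ?_
    rw [continuous_bool_rng true]
    have hev : Continuous fun φ : characterSpace ℂ A => φ (p n) :=
      (WeakDual.eval_continuous (p n)).comp continuous_subtype_val
    have h1 : (fun φ : characterSpace ℂ A => Φ φ n) ⁻¹' {true}
        = (fun φ : characterSpace ℂ A => φ (p n)) ⁻¹' {1} := by
      ext φ; simp [hΦdef]
    have h0 : (fun φ : characterSpace ℂ A => Φ φ n) ⁻¹' {true}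
        = ((fun φ : characterSpace ℂ A => φ (p n)) ⁻¹' {0})ᶜ := by
      ext φ
      rcases hval φ n with h | h <;> simp [hΦdef, h]
    constructor
    · rw [h1]; exact (isClosed_singleton).preimage hev
    · rw [h0]; exact ((isClosed_singleton).preimage hev).isOpen_compl
  have hΦemb : Topology.IsEmbedding Φ := (hΦcont.isClosedEmbedding hΦinj).isEmbedding
  -- the three topological properties
  haveI hmetr : TopologicalSpace.MetrizableSpace (characterSpace ℂ A) :=
    hΦemb.metrizableSpace
  haveI htd : TotallyDisconnectedSpace (characterSpace ℂ A) :=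
    hΦemb.isTotallyDisconnected_range.mp
      (fun t _ ht => TotallyDisconnectedSpace.isTotallyDisconnected_univ t (Set.subset_univ t) ht)
  refine ⟨⟨inferInstance, hmetr, htd⟩, ?_⟩
  -- construct the self-adjoint generator
  set g : characterSpace ℂ A → ℝ := fun x => Cardinal.cantorFunction (1/3) (Φ x) with hgdef
  have hginj : Function.Injective g :=
    (Cardinal.cantorFunction_injective (by norm_num) (by norm_num)).comp hΦinj
  have hgcont : Continuous g :=
    (continuous_cantorFunction_aux (by norm_num) (by norm_num)).comp hΦcont
  set gc : C(characterSpace ℂ A, ℂ) := ⟨fun x => (g x : ℂ), Complex.continuous_ofReal.comp hgcont⟩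
    with hgcdef
  have hgcinj : Function.Injective fun x : characterSpace ℂ A => gc x := by
    intro x y h
    exact hginj (Complex.ofReal_injective h)
  set T := gelfandStarTransform A with hTdef
  set a : A := T.symm gc with hadef
  have hTa : T a = gc := T.apply_symm_apply gc
  refine ⟨a, ?_, ?_, ?_⟩
  · -- self-adjointness
    have hsgc : star gc = gc := by
      ext x
      exact Complex.conj_ofReal _
    have : star a = T.symm (star gc) := (map_star T.symm gc).symm
    rw [hsgc] at this
    exact this
  · -- generation
    have hTiso : Isometry (⇑T) := StarAlgEquiv.isometry T
    have hTsiso : Isometry (⇑T.symm) := StarAlgEquiv.isometry T.symm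
    let Th : A ≃ₜ C(characterSpace ℂ A, ℂ) :=
      { toFun := T, invFun := T.symm, left_inv := T.symm_apply_apply,
        right_inv := T.apply_symm_apply,
        continuous_toFun := hTiso.continuous, continuous_invFun := hTsiso.continuous }
    have hsep : (StarAlgebra.adjoin ℂ ({gc} : Set C(characterSpace ℂ A, ℂ))).SeparatesPoints := by
      intro x y hxy
      exact ⟨gc, ⟨gc, StarAlgebra.subset_adjoin ℂ _ (Set.mem_singleton gc), rfl⟩,
        fun h => hxy (hgcinj h)⟩
    have hSW : (StarAlgebra.adjoin ℂ ({gc} : Set C(characterSpace ℂ A, ℂ))).topologicalClosure = ⊤ :=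
      ContinuousMap.starSubalgebra_topologicalClosure_eq_top_of_separatesPoints _ hsep
    have himg : (StarAlgebra.adjoin ℂ ({gc} : Set C(characterSpace ℂ A, ℂ)) :
        Set C(characterSpace ℂ A, ℂ)) = ⇑T '' (StarAlgebra.adjoin ℂ ({a} : Set A)) := by
      have h1 := StarAlgHom.map_adjoin (T : A →⋆ₐ[ℂ] C(characterSpace ℂ A, ℂ)) ({a} : Set A)
      have h2 : (T : A →⋆ₐ[ℂ] C(characterSpace ℂ A, ℂ)) '' ({a} : Set A) = {gc} := by
        rw [Set.image_singleton]
        congr 1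
      rw [h2] at h1
      rw [← h1]
      rfl
    rw [eq_top_iff]
    rintro b -
    show b ∈ closure ((StarAlgebra.adjoin ℂ ({a} : Set A)) : Set A)
    have hb : T b ∈ closure ((StarAlgebra.adjoin ℂ ({gc} : Set C(characterSpace ℂ A, ℂ))) :
        Set C(characterSpace ℂ A, ℂ)) := by
      have : T b ∈ (StarAlgebra.adjoin ℂ ({gc} : Set C(characterSpace ℂ A, ℂ))).topologicalClosure := by
        rw [hSW]; trivial
      exact this
    have hThcoe : ⇑Th = ⇑T := rfl
    rw [himg, ← hThcoe, ← Th.image_closure] at hb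
    obtain ⟨c, hc, hcb⟩ := hb
    have : c = b := T.injective hcb
    rwa [← this]
  · -- the spectrum embeds in the Cantor space
    have hspec : spectrum ℂ a = Set.range fun x : characterSpace ℂ A => gc x := by
      have h1 : gelfandTransform ℂ A a = gc := hTa
      rw [← spectrum.gelfandTransform_eq a, h1, ContinuousMap.spectrum_eq_range]
    have hembc : Topology.IsEmbedding fun x : characterSpace ℂ A => gc x :=
      ((map_continuous gc).isClosedEmbedding hgcinj).isEmbedding
    let e1 : characterSpace ℂ A ≃ₜ Set.range fun x : characterSpace ℂ A => gc x :=
      hembc.toHomeomorph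
    let e0 : (spectrum ℂ a : Set ℂ) ≃ₜ (Set.range fun x : characterSpace ℂ A => gc x) :=
      Homeomorph.setCongr hspec
    exact ⟨fun z => Φ (e1.symm (e0 z)),
      (hΦemb.comp e1.symm.isEmbedding).comp e0.isEmbedding⟩
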